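/- arXiv:1810.11095 — 2 statements merged into one kernel-verified Lean document; each statement's English description precedes it below -/
import Mathlib

section
/- Let ℓ ≥ 1 and let (z_i)_{i≥ℓ} be integers with |z_i| ≤ a_i − 1 for all i ≥ ℓ. Then the series ∑_{i=ℓ}^∞ z_i ζ_i converges absolutely and |∑_{i=ℓ}^∞ z_i ζ_i| ≤ a_ℓ ζ_ℓ − ∑_{i=ℓ+2}^∞ ζ_i < ζ_{ℓ−1}, where ζ_j = |q_j α − p_j| and ζ_0 = 1. -/
open scoped BigOperators

/-- The Gauss map `G(x) = 1/x - ⌊1/x⌋`. -/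
noncomputable def gaussMap (x : ℝ) : ℝ := Int.fract (1 / x)

/-- The partial quotients of the continued fraction of `α`:
`a 0 = ⌊α⌋` and `a k = ⌊1 / G^[k-1] (fract α)⌋` for `k ≥ 1`. -/
noncomputable def cfA (α : ℝ) : ℕ → ℤ
  | 0 => ⌊α⌋
  | k + 1 => ⌊1 / (gaussMap^[k] (Int.fract α))⌋

/-- Numerators of the convergents: `p 0 = 1`, `p 1 = a 0`,
`p k = a (k-1) * p (k-1) + p (k-2)`. -/
noncomputable def cfP (α : ℝ) : ℕ → ℤ
  | 0 => 1
  | 1 => cfA α 0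
  | k + 2 => cfA α (k + 1) * cfP α (k + 1) + cfP α k

/-- Denominators of the convergents: `q 0 = 0`, `q 1 = 1`,
`q k = a (k-1) * q (k-1) + q (k-2)`. -/
noncomputable def cfQ (α : ℝ) : ℕ → ℤ
  | 0 => 0
  | 1 => 1
  | k + 2 => cfA α (k + 1) * cfQ α (k + 1) + cfQ α k

/-- `ζ k = |q k * α - p k|`. -/
noncomputable def cfZeta (α : ℝ) (k : ℕ) : ℝ := |(cfQ α k : ℝ) * α - (cfP α k : ℝ)|

/-- `ε k = |α - p k / q k|`. -/
noncomputable def cfEps (α : ℝ) (k : ℕ) : ℝ := |α - (cfP α k : ℝ) / (cfQ α k : ℝ)|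

open Finset Filter Topology

set_option maxHeartbeats 1000000

noncomputable def tq (α : ℝ) (k : ℕ) : ℝ := gaussMap^[k] (Int.fract α)

lemma tq_succ (α : ℝ) (k : ℕ) : tq α (k + 1) = Int.fract (1 / tq α k) := by
  simp [tq, Function.iterate_succ_apply', gaussMap]

lemma fract_irr {x : ℝ} (hx : Irrational x) :
    Irrational (Int.fract x) ∧ 0 < Int.fract x ∧ Int.fract x < 1 := by
  have h1 : Irrational (Int.fract x) := by
    have := hx.sub_intCast ⌊x⌋
    rwa [Int.self_sub_floor] at this
  exact ⟨h1, Int.fract_pos.2 (hx.ne_int ⌊x⌋), Int.fract_lt_one x⟩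

lemma tq_prop (α : ℝ) (hα : Irrational α) (k : ℕ) :
    Irrational (tq α k) ∧ 0 < tq α k ∧ tq α k < 1 := by
  induction k with
  | zero => exact fract_irr hα
  | succ k ih =>
    rw [tq_succ]
    exact fract_irr (by simpa [one_div] using ih.1.inv)

lemma cfA_eq (α : ℝ) (k : ℕ) : cfA α (k + 1) = ⌊1 / tq α k⌋ := rfl

lemma cfA_floor (α : ℝ) (hα : Irrational α) (k : ℕ) :
    ((cfA α (k + 1) : ℝ)) = 1 / tq α k - tq α (k + 1) := by
  rw [cfA_eq, tq_succ, Int.fract]; ring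

lemma cfA_ge_one (α : ℝ) (hα : Irrational α) (k : ℕ) : 1 ≤ cfA α (k + 1) := by
  obtain ⟨_, h0, h1⟩ := tq_prop α hα k
  rw [cfA_eq]
  exact Int.le_floor.2 (by push_cast; exact one_le_one_div h0 h1.le)

lemma signed_zeta (α : ℝ) (hα : Irrational α) (k : ℕ) :
    (cfQ α k : ℝ) * α - (cfP α k : ℝ) = (-1) ^ (k + 1) * ∏ i ∈ range k, tq α i := by
  induction k using Nat.strong_induction_on with
  | _ k ih =>
    match k with
    | 0 => simp [cfQ, cfP]
    | 1 =>
      simp only [cfQ, cfP, cfA, range_one, prod_singleton, Int.cast_one, one_mul]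
      rw [show tq α 0 = Int.fract α from rfl, ← Int.self_sub_floor]
      push_cast
      ring
    | (k + 2) =>
      have h1 := ih (k + 1) (by omega)
      have h0 := ih k (by omega)
      obtain ⟨_, ht0, _⟩ := tq_prop α hα k
      have hfl := cfA_floor α hα k
      simp only [cfQ, cfP]
      push_cast
      have expand : ((cfA α (k + 1) : ℝ) * (cfQ α (k + 1)) + cfQ α k) * α -
          ((cfA α (k + 1) : ℝ) * (cfP α (k + 1)) + cfP α k)
          = (cfA α (k + 1) : ℝ) * ((cfQ α (k + 1) : ℝ) * α - cfP α (k + 1))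
            + ((cfQ α k : ℝ) * α - cfP α k) := by ring
      rw [expand, h1, h0, hfl]
      simp only [prod_range_succ]
      have hpow : (-1 : ℝ) ^ (k + 1 + 1) = -((-1) ^ (k + 1)) := by ring
      have hpow3 : (-1 : ℝ) ^ (k + 2 + 1) = (-1) ^ (k + 1) := by
        rw [pow_succ, pow_succ]; ring
      rw [hpow, hpow3]
      set P := ∏ i ∈ range k, tq α i
      field_simp
      ring

lemma zeta_eq_prod (α : ℝ) (hα : Irrational α) (k : ℕ) :
    cfZeta α k = ∏ i ∈ range k, tq α i := by
  rw [cfZeta, signed_zeta α hα, abs_mul, abs_pow, abs_neg, abs_one, one_pow, one_mul]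
  exact abs_of_pos (prod_pos fun i _ => (tq_prop α hα i).2.1)

lemma zeta_pos (α : ℝ) (hα : Irrational α) (k : ℕ) : 0 < cfZeta α k := by
  rw [zeta_eq_prod α hα]
  exact prod_pos fun i _ => (tq_prop α hα i).2.1

lemma zeta_succ (α : ℝ) (hα : Irrational α) (k : ℕ) :
    cfZeta α (k + 1) = cfZeta α k * tq α k := by
  rw [zeta_eq_prod α hα, zeta_eq_prod α hα, prod_range_succ]

lemma zeta_rec (α : ℝ) (hα : Irrational α) (k : ℕ) :
    cfZeta α k = (cfA α (k + 1) : ℝ) * cfZeta α (k + 1) + cfZeta α (k + 2) := by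
  obtain ⟨_, ht0, _⟩ := tq_prop α hα k
  rw [zeta_succ α hα (k+1), zeta_succ α hα k, cfA_floor α hα k]
  field_simp
  ring

theorem upper_bound' (α : ℝ) (hα : Irrational α) (l : ℕ) (hl : 1 ≤ l) (z : ℕ → ℤ)
    (hz : ∀ i, l ≤ i → |z i| ≤ cfA α i - 1) :
    Summable (fun i : ℕ => |(z (l + i) : ℝ) * cfZeta α (l + i)|) ∧
    |∑' i : ℕ, (z (l + i) : ℝ) * cfZeta α (l + i)|
      ≤ (cfA α l : ℝ) * cfZeta α l - ∑' i : ℕ, cfZeta α (l + 2 + i) ∧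
    (cfA α l : ℝ) * cfZeta α l - ∑' i : ℕ, cfZeta α (l + 2 + i) < cfZeta α (l - 1) := by
  obtain ⟨m, rfl⟩ : ∃ m, l = m + 1 := ⟨l - 1, (Nat.succ_pred_eq_of_pos hl).symm⟩
  set ζ : ℕ → ℝ := cfZeta α with hζ
  have hzpos : ∀ k, 0 < ζ k := zeta_pos α hα
  have hrec : ∀ k, ζ k = (cfA α (k + 1) : ℝ) * ζ (k + 1) + ζ (k + 2) := zeta_rec α hα
  have ha1 : ∀ k, (1 : ℝ) ≤ (cfA α (k + 1) : ℝ) := fun k => by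
    exact_mod_cast cfA_ge_one α hα k
  set f : ℕ → ℝ := fun i => (cfA α (m + 1 + i) : ℝ) * ζ (m + 1 + i) with hf
  have hfnn : ∀ i, 0 ≤ f i := fun i => by
    have := ha1 (m + i)
    have h2 := hzpos (m + 1 + i)
    have : (0:ℝ) ≤ (cfA α (m + 1 + i) : ℝ) := by
      rw [show m + 1 + i = m + i + 1 by omega]; linarith [ha1 (m + i)]
    positivity
  -- telescoping partial sums
  have htel : ∀ N, ∑ i ∈ range N, f i = ζ m + ζ (m + 1) - ζ (m + N) - ζ (m + N + 1) := by
    intro N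
    induction N with
    | zero => simp
    | succ N ihN =>
      rw [sum_range_succ, ihN]
      have h := hrec (m + N)
      have e1 : m + 1 + N = m + N + 1 := by omega
      have e2 : m + (N + 1) = m + N + 1 := by omega
      have e3 : m + N + 1 + 1 = m + N + 2 := by omega
      simp only [hf, e1, e2, e3]
      linarith
  have hbdd : ∀ N, ∑ i ∈ range N, f i ≤ ζ m + ζ (m + 1) := fun N => by
    have := hzpos (m + N); have := hzpos (m + N + 1)
    linarith [htel N]
  have hsumf : Summable f := summable_of_sum_range_le hfnn hbdd
  have hsumζ : Summable (fun i => ζ (m + 1 + i)) := by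
    refine Summable.of_nonneg_of_le (fun i => (hzpos _).le) (fun i => ?_) hsumf
    have h1 : (1:ℝ) ≤ (cfA α (m + 1 + i) : ℝ) := by
      rw [show m + 1 + i = m + i + 1 by omega]; exact ha1 (m + i)
    have hfi : f i = (cfA α (m + 1 + i) : ℝ) * ζ (m + 1 + i) := rfl
    rw [hfi]
    nlinarith [hzpos (m + 1 + i)]
  have htend : Tendsto (fun N => ζ (m + 1 + N)) atTop (𝓝 0) := by
    simpa using hsumζ.tendsto_atTop_zero
  have htend' : Tendsto (fun N => ζ (m + N)) atTop (𝓝 0) := by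
    have heq : (fun N : ℕ => ζ (m + (N + 1))) = fun N => ζ (m + 1 + N) := by
      funext N; congr 1; omega
    have : Tendsto (fun N => ζ (m + (N + 1))) atTop (𝓝 0) := by rw [heq]; exact htend
    exact (tendsto_add_atTop_iff_nat 1).1 this
  have htend'' : Tendsto (fun N => ζ (m + N + 1)) atTop (𝓝 0) := by
    have heq : (fun N : ℕ => ζ (m + N + 1)) = fun N => ζ (m + 1 + N) := by
      funext N; congr 1; omega
    rw [heq]; exact htend
  have htsumf : ∑' i, f i = ζ m + ζ (m + 1) := by
    refine HasSum.tsum_eq ?_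
    rw [hasSum_iff_tendsto_nat_of_nonneg hfnn]
    simp_rw [htel]
    have : Tendsto (fun N => ζ m + ζ (m + 1) - ζ (m + N) - ζ (m + N + 1)) atTop
        (𝓝 (ζ m + ζ (m + 1) - 0 - 0)) :=
      (tendsto_const_nhds.sub htend').sub htend''
    simpa using this
  -- splitting the zeta tail sum
  have hsplit : ∑' i, ζ (m + 1 + i)
      = ζ (m + 1) + ζ (m + 2) + ∑' i, ζ (m + 1 + 2 + i) := by
    have h2 := (Summable.sum_add_tsum_nat_add 2 hsumζ).symm
    rw [h2]
    have : ∑ i ∈ range 2, ζ (m + 1 + i) = ζ (m + 1) + ζ (m + 2) := by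
      simp [sum_range_succ, show m + 1 + 1 = m + 2 by omega]
    rw [this]
    congr 1
    exact tsum_congr fun i => by rw [show m + 1 + (i + 2) = m + 1 + 2 + i by omega]
  set T : ℝ := ∑' i, ζ (m + 1 + 2 + i) with hT
  have hTnn : 0 ≤ T := tsum_nonneg fun i => (hzpos _).le
  -- absolute values of z terms
  have hzabs : ∀ i, |(z (m + 1 + i) : ℝ)| ≤ (cfA α (m + 1 + i) : ℝ) - 1 := fun i => by
    have := hz (m + 1 + i) (by omega)
    have h' : ((|z (m + 1 + i)| : ℤ) : ℝ) ≤ ((cfA α (m + 1 + i) - 1 : ℤ) : ℝ) := by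
      exact_mod_cast this
    push_cast at h'
    exact h'
  have hle : ∀ i, |(z (m + 1 + i) : ℝ) * ζ (m + 1 + i)|
      ≤ (cfA α (m + 1 + i) : ℝ) * ζ (m + 1 + i) - ζ (m + 1 + i) := fun i => by
    rw [abs_mul, abs_of_pos (hzpos _)]
    nlinarith [hzabs i, hzpos (m + 1 + i), abs_nonneg ((z (m + 1 + i) : ℝ))]
  have hsumg : Summable (fun i => (cfA α (m + 1 + i) : ℝ) * ζ (m + 1 + i) - ζ (m + 1 + i)) :=
    hsumf.sub hsumζ
  have hsumabs : Summable (fun i : ℕ => |(z (m + 1 + i) : ℝ) * ζ (m + 1 + i)|) :=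
    Summable.of_nonneg_of_le (fun i => abs_nonneg _) hle hsumg
  refine ⟨hsumabs, ?_, ?_⟩
  · have step1 : |∑' i, (z (m + 1 + i) : ℝ) * ζ (m + 1 + i)|
        ≤ ∑' i, |(z (m + 1 + i) : ℝ) * ζ (m + 1 + i)| := by
      have hn : Summable (fun i : ℕ => ‖(z (m + 1 + i) : ℝ) * ζ (m + 1 + i)‖) := by
        simp only [Real.norm_eq_abs]; exact hsumabs
      calc |∑' i, (z (m + 1 + i) : ℝ) * ζ (m + 1 + i)|
          = ‖∑' i, (z (m + 1 + i) : ℝ) * ζ (m + 1 + i)‖ := (Real.norm_eq_abs _).symm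
        _ ≤ ∑' i, ‖(z (m + 1 + i) : ℝ) * ζ (m + 1 + i)‖ := norm_tsum_le_tsum_norm hn
        _ = ∑' i, |(z (m + 1 + i) : ℝ) * ζ (m + 1 + i)| := by
            simp only [Real.norm_eq_abs]
    have step2 : ∑' i, |(z (m + 1 + i) : ℝ) * ζ (m + 1 + i)|
        ≤ ∑' i, ((cfA α (m + 1 + i) : ℝ) * ζ (m + 1 + i) - ζ (m + 1 + i)) :=
      Summable.tsum_le_tsum hle hsumabs hsumg
    have step3 : ∑' i, ((cfA α (m + 1 + i) : ℝ) * ζ (m + 1 + i) - ζ (m + 1 + i))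
        = (∑' i, f i) - ∑' i, ζ (m + 1 + i) := Summable.tsum_sub hsumf hsumζ
    have hrecm := hrec m
    have e4 : ∑' i, ζ (m + 1 + 2 + i) = ∑' i, ζ (m + 1 + 2 + i) := rfl
    calc |∑' i, (z (m + 1 + i) : ℝ) * ζ (m + 1 + i)|
        ≤ (∑' i, f i) - ∑' i, ζ (m + 1 + i) := by linarith [step1, step2, step3.le, step3.ge]
      _ = ζ m + ζ (m + 1) - (ζ (m + 1) + ζ (m + 2) + T) := by rw [htsumf, hsplit]
      _ = (cfA α (m + 1) : ℝ) * ζ (m + 1) - T := by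
          rw [show (m:ℕ) + 1 + 1 = m + 2 by omega] at hrecm; linarith
  · have hrecm := hrec m
    rw [show (m:ℕ) + 1 + 1 = m + 2 by omega] at hrecm
    have := hzpos (m + 2)
    simp only [Nat.add_sub_cancel]
    linarith


/-- If `ℓ ≥ 1` and the integers `z i` satisfy `|z i| ≤ a i - 1` for `i ≥ ℓ`,
then `∑_{i=ℓ}^∞ z i ζ i` converges absolutely and
`|∑_{i=ℓ}^∞ z i ζ i| ≤ a ℓ * ζ ℓ - ∑_{i=ℓ+2}^∞ ζ i < ζ (ℓ-1)`. -/
theorem upper_bound (α : ℝ) (hα : Irrational α) (l : ℕ) (hl : 1 ≤ l) (z : ℕ → ℤ)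
    (hz : ∀ i, l ≤ i → |z i| ≤ cfA α i - 1) :
    Summable (fun i : ℕ => |(z (l + i) : ℝ) * cfZeta α (l + i)|) ∧
    |∑' i : ℕ, (z (l + i) : ℝ) * cfZeta α (l + i)|
      ≤ (cfA α l : ℝ) * cfZeta α l - ∑' i : ℕ, cfZeta α (l + 2 + i) ∧
    (cfA α l : ℝ) * cfZeta α l - ∑' i : ℕ, cfZeta α (l + 2 + i) < cfZeta α (l - 1) := by
  exact upper_bound' α hα l hl z hz
end

section
/- Suppose α is badly approximable, i.e., its partial quotients (a_k) are bounded. If β is a real number such that the distance from q_k β to the nearest integer tends to 0 as k → ∞ (where q_k are the continued fraction denominators of α), then there exists an integer n such that β − nα is an integer, i.e., β ≡ nα (mod 1). (In particular, the only possible eigenvalues e^{2πiβ} of the transformation T_α are the powers e^{2πinα}, n ∈ ℤ.) -/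
open scoped BigOperators

/-- auxiliary: the Gauss map orbit. -/
noncomputable def cfX (α : ℝ) (k : ℕ) : ℝ := gaussMap^[k] (Int.fract α)

lemma cfX_zero (α : ℝ) : cfX α 0 = Int.fract α := rfl

lemma cfX_succ (α : ℝ) (k : ℕ) : cfX α (k+1) = Int.fract (1 / cfX α k) := by
  rw [cfX, Function.iterate_succ_apply']; rfl

lemma cfA_succ (α : ℝ) (k : ℕ) : cfA α (k+1) = ⌊1 / cfX α k⌋ := rfl

lemma cfX_props (α : ℝ) (hα : Irrational α) :
    ∀ k, Irrational (cfX α k) ∧ 0 < cfX α k ∧ cfX α k < 1 := by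
  intro k
  induction k with
  | zero =>
    have h1 : Irrational (Int.fract α) := by
      rw [← Int.self_sub_floor]; exact hα.sub_intCast _
    exact ⟨h1, (Int.fract_nonneg α).lt_of_ne' h1.ne_zero, Int.fract_lt_one α⟩
  | succ k ih =>
    obtain ⟨hirr, h0, h1⟩ := ih
    have hinv : Irrational (1 / cfX α k) := by rw [one_div]; exact hirr.inv
    have h1' : Irrational (cfX α (k+1)) := by
      rw [cfX_succ, ← Int.self_sub_floor]; exact hinv.sub_intCast _
    refine ⟨h1', ?_, ?_⟩
    · rw [cfX_succ]
      exact (Int.fract_nonneg _).lt_of_ne' (by rw [← cfX_succ]; exact h1'.ne_zero)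
    · rw [cfX_succ]; exact Int.fract_lt_one _

lemma cfA_one_le (α : ℝ) (hα : Irrational α) (k : ℕ) : 1 ≤ cfA α (k+1) := by
  obtain ⟨_, h0, h1⟩ := cfX_props α hα k
  rw [cfA_succ, Int.le_floor]
  push_cast
  exact one_le_one_div h0 h1.le

/-- `θ k = q k α - p k`. -/
noncomputable def cfT (α : ℝ) (k : ℕ) : ℝ := (cfQ α k : ℝ) * α - (cfP α k : ℝ)

lemma cfQ_rec (α : ℝ) (k : ℕ) :
    cfQ α (k+2) = cfA α (k+1) * cfQ α (k+1) + cfQ α k := rfl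

lemma cfP_rec (α : ℝ) (k : ℕ) :
    cfP α (k+2) = cfA α (k+1) * cfP α (k+1) + cfP α k := rfl

lemma cfT_rec (α : ℝ) (k : ℕ) :
    cfT α (k+2) = (cfA α (k+1) : ℝ) * cfT α (k+1) + cfT α k := by
  simp only [cfT, cfQ_rec, cfP_rec]; push_cast; ring

lemma cfT_step (α : ℝ) (hα : Irrational α) :
    ∀ k, cfT α (k+1) = -(cfX α k) * cfT α k := by
  intro k
  induction k with
  | zero =>
    have : cfT α 1 = α - (⌊α⌋ : ℝ) := by simp [cfT, cfQ, cfP, cfA]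
    have h0 : cfT α 0 = -1 := by simp [cfT, cfQ, cfP]
    rw [this, h0, cfX_zero, Int.self_sub_floor]; ring
  | succ k ih =>
    obtain ⟨_, hx0, hx1⟩ := cfX_props α hα k
    have hxk1 : cfX α (k+1) = 1 / cfX α k - (cfA α (k+1) : ℝ) := by
      rw [cfX_succ, cfA_succ, ← Int.self_sub_floor]
    rw [cfT_rec, ih, hxk1]
    field_simp
    ring

lemma cfT_abs_le_one (α : ℝ) (hα : Irrational α) : ∀ k, |cfT α k| ≤ 1 := by
  intro k
  induction k with
  | zero => simp [cfT, cfQ, cfP]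
  | succ k ih =>
    obtain ⟨_, hx0, hx1⟩ := cfX_props α hα k
    rw [cfT_step α hα k, abs_mul, abs_neg, abs_of_pos hx0]
    calc cfX α k * |cfT α k| ≤ 1 * 1 := by
          apply mul_le_mul hx1.le ih (abs_nonneg _) zero_le_one
      _ = 1 := by ring

lemma cfDet (α : ℝ) : ∀ k, cfQ α (k+1) * cfP α k - cfQ α k * cfP α (k+1) = (-1)^k := by
  intro k
  induction k with
  | zero => simp [cfQ, cfP]
  | succ k ih =>
    rw [cfQ_rec, cfP_rec]
    ring_nf
    ring_nf at ih
    linear_combination -ih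

lemma cfQ_ge (α : ℝ) (hα : Irrational α) :
    ∀ k : ℕ, 1 ≤ cfQ α (k+1) ∧ (k : ℤ) ≤ cfQ α (k+1)
  | 0 => by simp [cfQ]
  | 1 => by
    have h : 1 ≤ cfA α 1 := cfA_one_le α hα 0
    have e : cfQ α (1+1) = cfA α 1 * 1 + 0 := rfl
    constructor <;> (rw [e]; push_cast; omega)
  | (k+2) => by
    have h1 := cfQ_ge α hα k
    have h2 := cfQ_ge α hα (k+1)
    have ha : 1 ≤ cfA α (k+2) := cfA_one_le α hα (k+1)
    have e : cfQ α (k+2+1) = cfA α (k+2) * cfQ α (k+2) + cfQ α (k+1) := rfl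
    have hmul : cfQ α (k+2) ≤ cfA α (k+2) * cfQ α (k+2) :=
      le_mul_of_one_le_left (by linarith [h2.1]) ha
    rw [e]
    push_cast at h2 ⊢
    constructor <;> linarith [h1.1, h2.2, hmul]

lemma cfQ_ge' (α : ℝ) (hα : Irrational α) (k : ℕ) : (k : ℤ) - 1 ≤ cfQ α k := by
  cases k with
  | zero => simp [cfQ]
  | succ k => have := (cfQ_ge α hα k).2; push_cast; omega

/-- If `α` is badly approximable (bounded partial quotients) and `β` is a real
number such that the distance from `q k * β` to the nearest integer tends to
`0`, then `β ≡ n α (mod 1)` for some integer `n`. -/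
theorem unique_eigenvalues (α : ℝ) (hα : Irrational α)
    (hbad : ∃ M : ℤ, ∀ k : ℕ, cfA α k ≤ M) (β : ℝ)
    (hβ : Filter.Tendsto
      (fun k : ℕ => |(cfQ α k : ℝ) * β - (round ((cfQ α k : ℝ) * β) : ℝ)|)
      Filter.atTop (nhds 0)) :
    ∃ n m : ℤ, β = n * α + m := by
  classical
  obtain ⟨M, hM⟩ := hbad
  have hM1 : (1:ℤ) ≤ M := le_trans (cfA_one_le α hα 0) (hM 1)
  set r : ℕ → ℤ := fun k => round ((cfQ α k : ℝ) * β) with hr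
  set δ : ℕ → ℝ := fun k => (cfQ α k : ℝ) * β - (r k : ℝ) with hδdef
  have hβ' : Filter.Tendsto (fun k => |δ k|) Filter.atTop (nhds 0) := hβ
  have hMR : (1:ℝ) ≤ (M:ℝ) := by exact_mod_cast hM1
  have hε : (0:ℝ) < 1 / ((M:ℝ) + 2) := by positivity
  obtain ⟨K, hKsmall⟩ := (Metric.tendsto_atTop.mp hβ') _ hε
  have hsmall : ∀ n, K ≤ n → |δ n| < 1 / ((M:ℝ)+2) := by
    intro n hn
    have := hKsmall n hn
    rwa [Real.dist_eq, sub_zero, abs_abs] at this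
  -- exact recursion for δ eventually
  have hrec : ∀ k, K ≤ k → δ (k+2) = (cfA α (k+1) : ℝ) * δ (k+1) + δ k := by
    intro k hk
    set c : ℤ := cfA α (k+1) * r (k+1) + r k - r (k+2) with hc
    have hq : ((cfQ α (k+2) : ℤ) : ℝ)
        = (cfA α (k+1):ℝ) * (cfQ α (k+1):ℝ) + (cfQ α k : ℝ) := by
      rw [cfQ_rec]; push_cast; ring
    have key : (c : ℝ) = δ (k+2) - (cfA α (k+1):ℝ) * δ (k+1) - δ k := by
      simp only [hc, hδdef]
      push_cast
      rw [hq]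
      ring
    have ha1 : (1:ℝ) ≤ (cfA α (k+1) : ℝ) := by exact_mod_cast cfA_one_le α hα k
    have haM : (cfA α (k+1) : ℝ) ≤ (M:ℝ) := by exact_mod_cast hM (k+1)
    have h1 := hsmall k hk
    have h2 := hsmall (k+1) (by omega)
    have h3 := hsmall (k+2) (by omega)
    have habs : |(c:ℝ)| < 1 := by
      rw [key]
      have t1 : |δ (k+2) - (cfA α (k+1):ℝ) * δ (k+1) - δ k|
          ≤ |δ (k+2)| + (cfA α (k+1):ℝ) * |δ (k+1)| + |δ k| := by
        calc |δ (k+2) - (cfA α (k+1):ℝ) * δ (k+1) - δ k|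
            ≤ |δ (k+2) - (cfA α (k+1):ℝ) * δ (k+1)| + |δ k| := abs_sub _ _
          _ ≤ |δ (k+2)| + |(cfA α (k+1):ℝ) * δ (k+1)| + |δ k| := by
              gcongr; exact abs_sub _ _
          _ = |δ (k+2)| + (cfA α (k+1):ℝ) * |δ (k+1)| + |δ k| := by
              rw [abs_mul, abs_of_nonneg (show (0:ℝ) ≤ (cfA α (k+1):ℝ) by linarith)]
      have t2 : (cfA α (k+1):ℝ) * |δ (k+1)| ≤ (M:ℝ) * |δ (k+1)| := by
        apply mul_le_mul_of_nonneg_right haM (abs_nonneg _)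
      have t3 : (M:ℝ) * |δ (k+1)| ≤ (M:ℝ) * (1/((M:ℝ)+2)) := by
        apply mul_le_mul_of_nonneg_left h2.le (by linarith)
      have hfin : (1/((M:ℝ)+2)) + (1/((M:ℝ)+2)) + (M:ℝ) * (1/((M:ℝ)+2)) = 1 := by
        field_simp; ring
      calc |δ (k+2) - (cfA α (k+1):ℝ) * δ (k+1) - δ k|
          ≤ |δ (k+2)| + (cfA α (k+1):ℝ) * |δ (k+1)| + |δ k| := t1
        _ < (1/((M:ℝ)+2)) + (M:ℝ) * (1/((M:ℝ)+2)) + (1/((M:ℝ)+2)) := by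
            linarith [t2, t3]
        _ = 1 := by linarith [hfin]
    have hc0 : c = 0 := by
      have h' : ((|c| : ℤ) : ℝ) < 1 := by rw [Int.cast_abs]; exact habs
      have h'' : |c| < 1 := by exact_mod_cast h'
      have := abs_lt.mp h''
      omega
    have := key
    rw [hc0] at this
    push_cast at this
    linarith
  -- solve the recursion: δ j = A q j + B θ j for j ≥ K
  set s : ℝ := (-1)^K with hs
  have hss : s * s = 1 := by
    rw [hs, ← pow_add]; exact Even.neg_one_pow ⟨K, rfl⟩
  have hdetR : ∀ k, (cfQ α k : ℝ) * cfT α (k+1) - (cfQ α (k+1):ℝ) * cfT α k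
      = (-1)^k := by
    intro k
    have h := cfDet α k
    have h' : ((cfQ α (k+1) * cfP α k - cfQ α k * cfP α (k+1) : ℤ) : ℝ)
        = ((-1:ℤ)^k : ℝ) := by exact_mod_cast congrArg (fun z : ℤ => (z:ℝ)) h
    push_cast at h'
    simp only [cfT]
    linear_combination h'
  obtain ⟨A, B, hAB1, hAB2, hBdef⟩ :
      ∃ A B : ℝ, δ K = A * (cfQ α K:ℝ) + B * cfT α K
        ∧ δ (K+1) = A * (cfQ α (K+1):ℝ) + B * cfT α (K+1)
        ∧ B = s * ((cfQ α K:ℝ) * δ (K+1) - (cfQ α (K+1):ℝ) * δ K) := by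
    refine ⟨s * (δ K * cfT α (K+1) - δ (K+1) * cfT α K),
      s * ((cfQ α K:ℝ) * δ (K+1) - (cfQ α (K+1):ℝ) * δ K), ?_, ?_, rfl⟩
    · have hd := hdetR K
      rw [← hs] at hd
      linear_combination (-(s * δ K)) * hd + (-(δ K)) * hss
    · have hd := hdetR K
      rw [← hs] at hd
      linear_combination (-(s * δ (K+1))) * hd + (-(δ (K+1))) * hss
  have hpair : ∀ j, δ (K+j) = A * (cfQ α (K+j):ℝ) + B * cfT α (K+j)
      ∧ δ (K+j+1) = A * (cfQ α (K+j+1):ℝ) + B * cfT α (K+j+1) := by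
    intro j
    induction j with
    | zero => exact ⟨hAB1, hAB2⟩
    | succ j ih =>
      refine ⟨ih.2, ?_⟩
      have h2 : K + (j+1) + 1 = (K+j) + 2 := by omega
      rw [h2]
      have hrq := hrec (K+j) (Nat.le_add_right _ _)
      have hq2 : (cfQ α (K+j+2) : ℝ)
          = (cfA α (K+j+1):ℝ)*(cfQ α (K+j+1):ℝ) + (cfQ α (K+j):ℝ) := by
        rw [cfQ_rec]; push_cast; ring
      rw [hrq, ih.1, ih.2, hq2, cfT_rec]
      ring
  -- A = 0
  have hA0 : A = 0 := by
    by_contra hA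
    obtain ⟨K2, hK2⟩ := (Metric.tendsto_atTop.mp hβ') 1 one_pos
    have hδ1 : ∀ n, K2 ≤ n → |δ n| ≤ 1 := by
      intro n hn
      have := hK2 n hn
      rw [Real.dist_eq, sub_zero, abs_abs] at this
      linarith
    obtain ⟨N, hN⟩ := exists_nat_gt ((1 + |B|)/|A|)
    set j : ℕ := N + K2 + 1 with hj
    set i : ℕ := K + j with hi
    have hqpos : (0:ℤ) < cfQ α i := by
      have := (cfQ_ge α hα (i-1)).1
      have : 1 ≤ cfQ α i := by
        have hi1 : i - 1 + 1 = i := by omega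
        rwa [hi1] at this
      omega
    have hqbig : ((1 + |B|)/|A|) < (cfQ α i : ℝ) := by
      have h1 : (i:ℤ) - 1 ≤ cfQ α i := cfQ_ge' α hα i
      have h2 : (N:ℤ) ≤ (i:ℤ) - 1 := by
        have : N + 1 ≤ i := by omega
        push_cast [hi, hj]
        omega
      have h3 : ((N:ℤ):ℝ) ≤ (cfQ α i : ℝ) := by exact_mod_cast le_trans h2 h1
      calc ((1 + |B|)/|A|) < (N:ℝ) := hN
        _ ≤ (cfQ α i : ℝ) := by exact_mod_cast h3
    have hApos : 0 < |A| := abs_pos.mpr hA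
    have hbig : 1 + |B| < |A| * (cfQ α i : ℝ) := by
      rw [div_lt_iff₀ hApos] at hqbig
      linarith [hqbig]
    have hsmall2 : |A| * (cfQ α i : ℝ) ≤ |δ i| + |B| := by
      have h := (hpair j).1
      have heq : A * (cfQ α i:ℝ) = δ i - B * cfT α i := by
        rw [hi]; linarith [h]
      have : |A * (cfQ α i:ℝ)| ≤ |δ i| + |B| * |cfT α i| := by
        rw [heq]
        calc |δ i - B * cfT α i| ≤ |δ i| + |B * cfT α i| := abs_sub _ _
          _ = |δ i| + |B| * |cfT α i| := by rw [abs_mul]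
      have hTle := cfT_abs_le_one α hα i
      have : |A * (cfQ α i:ℝ)| ≤ |δ i| + |B| := by
        nlinarith [abs_nonneg B]
      rwa [abs_mul, abs_of_pos (by exact_mod_cast hqpos : (0:ℝ) < (cfQ α i:ℝ))] at this
    have hδi : |δ i| ≤ 1 := hδ1 i (by omega)
    linarith
  -- B is an integer
  set n : ℤ := (-1)^K * (cfQ α (K+1) * r K - cfQ α K * r (K+1)) with hn
  have hBn : B = (n:ℝ) := by
    rw [hBdef, hn]
    simp only [hδdef]
    push_cast
    ring
  -- conclude
  have hδK : δ K = (n:ℝ) * cfT α K := by rw [hAB1, hA0, hBn]; ring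
  have hδK1 : δ (K+1) = (n:ℝ) * cfT α (K+1) := by rw [hAB2, hA0, hBn]; ring
  set sK : ℤ := r K - n * cfP α K with hsK
  set sK1 : ℤ := r (K+1) - n * cfP α (K+1) with hsK1
  have e1 : (cfQ α K : ℝ) * (β - (n:ℝ) * α) = (sK : ℝ) := by
    have h := hδK
    simp only [hδdef, cfT] at h
    rw [hsK]
    push_cast
    linarith [h]
  have e2 : (cfQ α (K+1) : ℝ) * (β - (n:ℝ) * α) = (sK1 : ℝ) := by
    have h := hδK1
    simp only [hδdef, cfT] at h
    rw [hsK1]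
    push_cast
    linarith [h]
  refine ⟨n, (-1)^K * (cfP α K * sK1 - cfP α (K+1) * sK), ?_⟩
  have hdR : (cfQ α (K+1):ℝ) * (cfP α K:ℝ) - (cfQ α K:ℝ) * (cfP α (K+1):ℝ) = s := by
    have h := cfDet α K
    have h' : ((cfQ α (K+1) * cfP α K - cfQ α K * cfP α (K+1) : ℤ) : ℝ)
        = ((-1:ℤ)^K : ℝ) := by exact_mod_cast congrArg (fun z : ℤ => (z:ℝ)) h
    push_cast at h'
    rw [hs]
    linarith [h']
  push_cast
  linear_combination (s * (cfP α K:ℝ)) * e2 - (s * (cfP α (K+1):ℝ)) * e1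
    + (-(s * (β - (n:ℝ)*α))) * hdR + ((n:ℝ)*α - β) * hss
end
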